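/- Let 0 < α < 1, 0 < θ < 1, η > 0, π_w = θ/(α+θ), π_s = α/(α+θ). Define sequences a_t, s_t ∈ (0,∞)^n by a_1 = (π_w/n)1, s_1 = (π_s/n)1, and given nonnegative losses ℓ_{t,i}: a_{t+1,i} = (1−α)·(a_{t,i} e^{−ηℓ_{t,i}}(Σⱼ a_{t,j}))/(Σⱼ a_{t,j} e^{−ηℓ_{t,j}}) + θ s_{t,i} and s_{t+1,i} = α·(a_{t,i} e^{−ηℓ_{t,i}}(Σⱼ a_{t,j}))/(Σⱼ a_{t,j} e^{−ηℓ_{t,j}}) + (1−θ)s_{t,i}. Define also w_1 = v_1 = (1/n)1, ẇ_{t,i} = w_{t,i}e^{−ηℓ_{t,i}}/Σⱼ w_{t,j}e^{−ηℓ_{t,j}}, w_{t+1} = (1−α)ẇ_t + αv_t, v_{t+1} = (1−θ)v_t + θẇ_t. Then for all t ≥ 1, a_t = π_w · w_t and s_t = π_s · v_t; in particular Σᵢ a_{t,i} = π_w and Σᵢ s_{t,i} = π_s for all t. -/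

import Mathlib

open Finset Real

/-- Proposition 1: equivalence of the partition-specialists
algorithm with Markov prior and the Share-θ algorithm. -/
theorem stmt_17 (n : ℕ) (hn : 0 < n) (α θ η : ℝ)
    (hα : 0 < α) (hα1 : α < 1) (hθ : 0 < θ) (hθ1 : θ < 1) (hη : 0 < η)
    (ℓ : ℕ → Fin n → ℝ) (hℓ : ∀ t i, 0 ≤ ℓ t i)
    (a s w v : ℕ → Fin n → ℝ)
    (ha1 : ∀ i, a 1 i = (θ / (α + θ)) / n)
    (hs1 : ∀ i, s 1 i = (α / (α + θ)) / n)
    (harec : ∀ t, 1 ≤ t → ∀ i, a (t + 1) i =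
      (1 - α) * (a t i * Real.exp (-η * ℓ t i) * (∑ j, a t j) /
        ∑ j, a t j * Real.exp (-η * ℓ t j)) + θ * s t i)
    (hsrec : ∀ t, 1 ≤ t → ∀ i, s (t + 1) i =
      α * (a t i * Real.exp (-η * ℓ t i) * (∑ j, a t j) /
        ∑ j, a t j * Real.exp (-η * ℓ t j)) + (1 - θ) * s t i)
    (hw1 : ∀ i, w 1 i = 1 / n) (hv1 : ∀ i, v 1 i = 1 / n)
    (hwrec : ∀ t, 1 ≤ t → ∀ i, w (t + 1) i =
      (1 - α) * (w t i * Real.exp (-η * ℓ t i) / ∑ j, w t j * Real.exp (-η * ℓ t j))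
        + α * v t i)
    (hvrec : ∀ t, 1 ≤ t → ∀ i, v (t + 1) i =
      (1 - θ) * v t i
        + θ * (w t i * Real.exp (-η * ℓ t i) / ∑ j, w t j * Real.exp (-η * ℓ t j))) :
    ∀ t, 1 ≤ t →
      (∀ i, a t i = (θ / (α + θ)) * w t i) ∧
      (∀ i, s t i = (α / (α + θ)) * v t i) ∧
      (∑ i, a t i = θ / (α + θ)) ∧ (∑ i, s t i = α / (α + θ)) := by
  have hαθ : 0 < α + θ := by linarith
  have hn' : (0:ℝ) < n := Nat.cast_pos.mpr hn
  have : Nonempty (Fin n) := ⟨⟨0, hn⟩⟩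
  set pw := θ / (α + θ) with hpwdef
  set ps := α / (α + θ) with hpsdef
  have hpwpos : 0 < pw := div_pos hθ hαθ
  have hpspos : 0 < ps := div_pos hα hαθ
  have hθps : θ * ps = α * pw := by
    rw [hpsdef, hpwdef]; field_simp
  have key : ∀ t, 1 ≤ t → (∀ i, 0 < w t i) ∧ (∀ i, 0 < v t i) ∧
      (∀ i, a t i = pw * w t i) ∧ (∀ i, s t i = ps * v t i) ∧
      (∑ i, w t i = 1) ∧ (∑ i, v t i = 1) := by
    intro t ht
    induction t, ht using Nat.le_induction with
    | base =>
      refine ⟨fun i => by rw [hw1]; positivity,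
              fun i => by rw [hv1]; positivity,
              fun i => by rw [ha1, hw1]; field_simp,
              fun i => by rw [hs1, hv1]; field_simp,
              ?_, ?_⟩
      · simp only [hw1]
        rw [Finset.sum_const, Finset.card_univ, Fintype.card_fin, nsmul_eq_mul]
        field_simp
      · simp only [hv1]
        rw [Finset.sum_const, Finset.card_univ, Fintype.card_fin, nsmul_eq_mul]
        field_simp
    | succ t ht ih =>
      obtain ⟨hwpos, hvpos, haw, hsv, hws, hvs⟩ := ih
      set D := ∑ j, w t j * Real.exp (-η * ℓ t j) with hD
      have hDpos : 0 < D :=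
        Finset.sum_pos (fun j _ => mul_pos (hwpos j) (Real.exp_pos _)) Finset.univ_nonempty
      have hsumA : ∑ j, a t j = pw := by
        simp only [haw, ← Finset.mul_sum, hws, mul_one]
      have hsumAE : ∑ j, a t j * Real.exp (-η * ℓ t j) = pw * D := by
        rw [hD, Finset.mul_sum]
        exact Finset.sum_congr rfl fun j _ => by rw [haw j]; ring
      have e1 : ∀ i, a t i * Real.exp (-η * ℓ t i) * (∑ j, a t j) /
          (∑ j, a t j * Real.exp (-η * ℓ t j)) =
          pw * (w t i * Real.exp (-η * ℓ t i) / D) := by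
        intro i
        rw [haw i, hsumA, hsumAE]
        field_simp
      refine ⟨?_, ?_, ?_, ?_, ?_, ?_⟩
      · intro i
        rw [hwrec t ht i]
        have h1 : 0 ≤ (1 - α) * (w t i * Real.exp (-η * ℓ t i) / D) :=
          mul_nonneg (by linarith) (div_nonneg (mul_nonneg (hwpos i).le (Real.exp_pos _).le) hDpos.le)
        have h2 : 0 < α * v t i := mul_pos hα (hvpos i)
        linarith
      · intro i
        rw [hvrec t ht i]
        have h1 : 0 ≤ θ * (w t i * Real.exp (-η * ℓ t i) / D) :=
          mul_nonneg hθ.le (div_nonneg (mul_nonneg (hwpos i).le (Real.exp_pos _).le) hDpos.le)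
        have h2 : 0 < (1 - θ) * v t i := mul_pos (by linarith) (hvpos i)
        linarith
      · intro i
        rw [harec t ht i, hwrec t ht i, e1 i, hsv i]
        linear_combination (v t i) * hθps
      · intro i
        rw [hsrec t ht i, hvrec t ht i, e1 i, hsv i]
        linear_combination -(w t i * Real.exp (-η * ℓ t i) / D) * hθps
      · calc ∑ i, w (t+1) i
            = ∑ i, ((1 - α) * (w t i * Real.exp (-η * ℓ t i) / D) + α * v t i) :=
              Finset.sum_congr rfl fun i _ => hwrec t ht i
          _ = (1 - α) * (D / D) + α * 1 := by
              rw [Finset.sum_add_distrib, ← Finset.mul_sum, ← Finset.mul_sum,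
                ← Finset.sum_div, hvs]
          _ = 1 := by rw [div_self hDpos.ne']; ring
      · calc ∑ i, v (t+1) i
            = ∑ i, ((1 - θ) * v t i + θ * (w t i * Real.exp (-η * ℓ t i) / D)) :=
              Finset.sum_congr rfl fun i _ => hvrec t ht i
          _ = (1 - θ) * 1 + θ * (D / D) := by
              rw [Finset.sum_add_distrib, ← Finset.mul_sum, ← Finset.mul_sum,
                ← Finset.sum_div, hvs]
          _ = 1 := by rw [div_self hDpos.ne']; ring
  intro t ht
  obtain ⟨_, _, haw, hsv, hws, hvs⟩ := key t ht
  refine ⟨haw, hsv, ?_, ?_⟩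
  · simp only [haw, ← Finset.mul_sum, hws, mul_one]
  · simp only [hsv, ← Finset.mul_sum, hvs, mul_one]
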